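/- For the binomial proportion p, the GML prior under chi-square divergence is proportional to p^{-3/4}(1−p)^{-3/4}, i.e., it is the Beta(1/4, 1/4) density up to normalization. (Obtained by transforming the canonical-parameter prior I^{1/4}(θ) with θ = logit(p) via the invariance property.) -/

import Mathlib

open Real

lemma deriv_logit (p : ℝ) (hp : 0 < p) (hp1 : p < 1) :
    deriv (fun q : ℝ => Real.log (q / (1 - q))) p = 1 / (p * (1 - p)) := by
  have h1 : 0 < 1 - p := by linarith
  have heq : (fun q : ℝ => Real.log (q / (1 - q))) =ᶠ[nhds p]
      fun q : ℝ => Real.log q - Real.log (1 - q) := by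
    filter_upwards [Ioo_mem_nhds hp hp1] with q hq
    rw [Real.log_div (ne_of_gt hq.1) (by linarith [hq.2])]
  rw [heq.deriv_eq]
  have hd1 : HasDerivAt (fun q : ℝ => Real.log q) (1 / p) p :=
    by simpa using Real.hasDerivAt_log hp.ne'
  have hd2 : HasDerivAt (fun q : ℝ => Real.log (1 - q)) (-(1 / (1 - p))) p := by
    have h : HasDerivAt (fun q : ℝ => 1 - q) (-1) p := by
      simpa using (hasDerivAt_id p).const_sub (1:ℝ)
    simpa [Function.comp_def] using (Real.hasDerivAt_log h1.ne').comp p h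
  have : deriv (fun q => log q - log (1 - q)) p = 1 / p - -(1 / (1 - p)) := (hd1.sub hd2).deriv
  rw [this]
  field_simp
  ring

theorem GML_prior_binomial (p : ℝ) (hp : 0 < p) (hp1 : p < 1) :
    deriv (fun q : ℝ => Real.log (q / (1 - q))) p = 1 / (p * (1 - p)) ∧
    (p * (1 - p)) ^ ((1 : ℝ) / 4) *
        |deriv (fun q : ℝ => Real.log (q / (1 - q))) p| =
      p ^ (-(3 / 4 : ℝ)) * (1 - p) ^ (-(3 / 4 : ℝ)) := by
  have h1 : 0 < 1 - p := by linarith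
  have hd := deriv_logit p hp hp1
  refine ⟨hd, ?_⟩
  rw [hd, abs_of_pos (by positivity)]
  rw [Real.mul_rpow hp.le h1.le]
  rw [Real.rpow_neg hp.le, Real.rpow_neg h1.le]
  rw [show (3/4 : ℝ) = 1 - 1/4 by norm_num]
  rw [Real.rpow_sub hp, Real.rpow_sub h1]
  simp [Real.rpow_one]
  field_simp
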